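/- Let k, j, l be integers with k > j ≥ 0 and l ≥ 0. Then there exists N such that for every n ≥ N, every vertex v of the circulant Circ(n, S_{k,j,l}) satisfies e(v) = 3·C(k−1, 2) + 3(k − 1 − j), where C(k−1,2) denotes the binomial coefficient (k−1 choose 2). -/

import Mathlib

/-- The circulant graph `Circ(n, S)`: vertices are `ZMod n`, and distinct
vertices `x, y` are adjacent iff `x - y ∈ S ∪ (-S)`. -/
def Circulant (n : ℕ) (S : Set (ZMod n)) : SimpleGraph (ZMod n) where
  Adj x y := x ≠ y ∧ x - y ∈ S ∪ -S
  symm := by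
    constructor
    rintro x y ⟨hxy, h⟩
    refine ⟨hxy.symm, ?_⟩
    have hyx : y - x = -(x - y) := by ring
    rw [hyx]
    rcases h with h | h
    · exact Or.inr (Set.neg_mem_neg.mpr h)
    · exact Or.inl (Set.mem_neg.mp h)
  loopless := ⟨fun x h => h.1 rfl⟩

/-- The number of edges of the subgraph of `G` induced by the open
neighbourhood of the vertex `v` (the quantity `e(v)`). -/
noncomputable def nbhdEdgeCount {V : Type*} (G : SimpleGraph V) (v : V) : ℕ :=
  Nat.card (SimpleGraph.induce (G.neighborSet v) G).edgeSet

/-- The jump set `S_{k,j,l} = {1, …, k-1} ∪ {k + j} ∪ R_{k,j,l}`, where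
`R_{k,j,l}` consists of the first `l` terms of the arithmetic progression
starting at `2(k+j)+1` with common difference `k+j+1`, viewed inside `ZMod n`. -/
def Skjl (n k j l : ℕ) : Set (ZMod n) :=
  (fun i : ℕ => (i : ZMod n)) ''
    (Set.Icc 1 (k - 1) ∪ {k + j} ∪
      (fun i : ℕ => 2 * (k + j) + 1 + i * (k + j + 1)) '' Set.Iio l)

def aTerm (k j : ℕ) (i : ℕ) : ℤ := 2*((k:ℤ)+j)+1 + (i:ℤ)*((k:ℤ)+j+1)

noncomputable def TF (k j l : ℕ) : Finset ℤ :=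
  (Finset.Icc 1 ((k:ℤ)-1) ∪ {((k:ℤ)+j)}) ∪ (Finset.range l).image (aTerm k j)

noncomputable def DF (k j l : ℕ) : Finset ℤ := TF k j l ∪ (TF k j l).image (fun z => -z)

lemma mem_TF {k j l : ℕ} {z : ℤ} : z ∈ TF k j l ↔
    (1 ≤ z ∧ z ≤ (k:ℤ)-1) ∨ z = (k:ℤ)+j ∨
    (∃ i : ℕ, i < l ∧ z = 2*((k:ℤ)+j)+1 + (i:ℤ)*((k:ℤ)+j+1)) := by
  simp [TF, aTerm, Finset.mem_union, Finset.mem_Icc, eq_comm, or_assoc]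
  tauto

lemma mem_DF {k j l : ℕ} {z : ℤ} : z ∈ DF k j l ↔
    ((1 ≤ z ∧ z ≤ (k:ℤ)-1) ∨ z = (k:ℤ)+j ∨
      (∃ i : ℕ, i < l ∧ z = 2*((k:ℤ)+j)+1 + (i:ℤ)*((k:ℤ)+j+1))) ∨
    ((1 ≤ -z ∧ -z ≤ (k:ℤ)-1) ∨ -z = (k:ℤ)+j ∨
      (∃ i : ℕ, i < l ∧ -z = 2*((k:ℤ)+j)+1 + (i:ℤ)*((k:ℤ)+j+1))) := by
  have h : z ∈ (TF k j l).image (fun z => -z) ↔ -z ∈ TF k j l := by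
    simp only [Finset.mem_image]
    constructor
    · rintro ⟨a, ha, rfl⟩; simpa using ha
    · intro h; exact ⟨-z, h, by ring⟩
  rw [DF, Finset.mem_union, h, mem_TF, mem_TF]

lemma nnc (k j : ℕ) (a : ℕ) : (0:ℤ) ≤ (a:ℤ)*((k:ℤ)+j+1) := by positivity

lemma tric (k j : ℕ) (a b : ℕ) :
    (a:ℤ)*((k:ℤ)+j+1) = (b:ℤ)*((k:ℤ)+j+1) ∨
    (a:ℤ)*((k:ℤ)+j+1) + ((k:ℤ)+j+1) ≤ (b:ℤ)*((k:ℤ)+j+1) ∨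
    (b:ℤ)*((k:ℤ)+j+1) + ((k:ℤ)+j+1) ≤ (a:ℤ)*((k:ℤ)+j+1) := by
  set c : ℤ := (k:ℤ)+j+1 with hc
  have hc0 : (0:ℤ) ≤ c := by positivity
  rcases Nat.lt_trichotomy a b with h | h | h
  · have : ((a:ℤ)+1) * c ≤ (b:ℤ) * c := by
      have : ((a:ℤ)+1) ≤ (b:ℤ) := by exact_mod_cast h
      exact mul_le_mul_of_nonneg_right this hc0
    right; left; linarith [this]
  · left; rw [h]
  · have : ((b:ℤ)+1) * c ≤ (a:ℤ) * c := by
      have : ((b:ℤ)+1) ≤ (a:ℤ) := by exact_mod_cast h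
      exact mul_le_mul_of_nonneg_right this hc0
    right; right; linarith [this]

lemma tri3c (k j : ℕ) (a b d : ℕ) :
    (a:ℤ)*((k:ℤ)+j+1) = (b:ℤ)*((k:ℤ)+j+1) + (d:ℤ)*((k:ℤ)+j+1) + 2*((k:ℤ)+j+1) ∨
    (a:ℤ)*((k:ℤ)+j+1) + ((k:ℤ)+j+1) ≤ (b:ℤ)*((k:ℤ)+j+1) + (d:ℤ)*((k:ℤ)+j+1) + 2*((k:ℤ)+j+1) ∨
    (b:ℤ)*((k:ℤ)+j+1) + (d:ℤ)*((k:ℤ)+j+1) + 2*((k:ℤ)+j+1) + ((k:ℤ)+j+1) ≤ (a:ℤ)*((k:ℤ)+j+1) := by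
  set c : ℤ := (k:ℤ)+j+1 with hc
  have hc0 : (0:ℤ) ≤ c := by positivity
  have e : ((b:ℤ)+(d:ℤ)+2) * c = (b:ℤ)*c + (d:ℤ)*c + 2*c := by ring
  rcases Nat.lt_trichotomy a (b+d+2) with h | h | h
  · have h1 : ((a:ℤ)+1) ≤ ((b:ℤ)+(d:ℤ)+2) := by exact_mod_cast h
    have := mul_le_mul_of_nonneg_right h1 hc0
    right; left; linarith [this, e]
  · left
    have : (a:ℤ) = (b:ℤ)+(d:ℤ)+2 := by exact_mod_cast h
    rw [this]; ring
  · have h1 : ((b:ℤ)+(d:ℤ)+2)+1 ≤ (a:ℤ) := by exact_mod_cast h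
    have := mul_le_mul_of_nonneg_right h1 hc0
    right; right; linarith [this, e]

lemma filter_m (k j l : ℕ) (hjk : j < k) :
    (DF k j l).filter (fun y => y + ((k:ℤ)+j) ∈ DF k j l)
      = Finset.Icc (-((k:ℤ)-1)) (-((j:ℤ)+1)) := by
  ext y
  simp only [Finset.mem_filter, mem_DF, Finset.mem_Icc]
  constructor
  · rintro ⟨((⟨a1,a2⟩|e1|⟨i2,hi2,e1⟩)|(⟨a1,a2⟩|e1|⟨i2,hi2,e1⟩)),
      ((⟨b1,b2⟩|e2|⟨i3,hi3,e2⟩)|(⟨b1,b2⟩|e2|⟨i3,hi3,e2⟩))⟩ <;>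
    first
      | omega
      | (have := nnc k j i2; omega)
      | (have := nnc k j i3; omega)
      | (have := nnc k j i2; have := nnc k j i3; omega)
      | (have := nnc k j i2; have := nnc k j i3; have := tric k j i2 i3; omega)
  · intro h
    refine ⟨Or.inr (Or.inl ?_), Or.inl (Or.inl ?_)⟩ <;> omega

lemma filter_small (k j l : ℕ) (hjk : j < k) (d : ℤ) (hd1 : 1 ≤ d) (hd2 : d ≤ (k:ℤ)-1) :
    (DF k j l).filter (fun y => y + d ∈ DF k j l)
      = (Finset.Icc 1 ((k:ℤ)-1-d) ∪ (Finset.Icc (-((k:ℤ)-1)) (-(d+1)) ∪ Finset.Icc (-(d-1)) (-1))) ∪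
        (({(k:ℤ)+j-d, -((k:ℤ)+j)} : Finset ℤ).filter (fun _ => (j:ℤ)+1 ≤ d)) := by
  ext y
  simp only [Finset.mem_filter, mem_DF, Finset.mem_Icc, Finset.mem_union, Finset.mem_insert,
    Finset.mem_singleton]
  constructor
  · rintro ⟨((⟨a1,a2⟩|e1|⟨i2,hi2,e1⟩)|(⟨a1,a2⟩|e1|⟨i2,hi2,e1⟩)),
      ((⟨b1,b2⟩|e2|⟨i3,hi3,e2⟩)|(⟨b1,b2⟩|e2|⟨i3,hi3,e2⟩))⟩ <;>
    first
      | omega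
      | (have := nnc k j i2; omega)
      | (have := nnc k j i3; omega)
      | (have := nnc k j i2; have := nnc k j i3; omega)
      | (have := nnc k j i2; have := nnc k j i3; have := tric k j i2 i3; omega)
  · rintro ((⟨h1,h2⟩|(⟨h1,h2⟩|⟨h1,h2⟩))|⟨(h1|h1),h2⟩)
    · exact ⟨Or.inl (Or.inl (by omega)), Or.inl (Or.inl (by omega))⟩
    · exact ⟨Or.inr (Or.inl (by omega)), Or.inr (Or.inl (by omega))⟩
    · exact ⟨Or.inr (Or.inl (by omega)), Or.inl (Or.inl (by omega))⟩
    · exact ⟨Or.inl (Or.inl (by omega)), Or.inl (Or.inr (Or.inl (by omega)))⟩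
    · exact ⟨Or.inr (Or.inr (Or.inl (by omega))), Or.inr (Or.inl (by omega))⟩

lemma filter_a (k j l : ℕ) (hjk : j < k) (i : ℕ) :
    (DF k j l).filter (fun y => y + aTerm k j i ∈ DF k j l) = ∅ := by
  ext y
  simp only [Finset.mem_filter, mem_DF, Finset.notMem_empty, iff_false, not_and, aTerm]
  intro hy hyd
  have hpi := nnc k j i
  revert hyd
  rcases hy with ((⟨a1,a2⟩|e1|⟨i2,hi2,e1⟩)|(⟨a1,a2⟩|e1|⟨i2,hi2,e1⟩)) <;>
  · rintro ((⟨b1,b2⟩|e2|⟨i3,hi3,e2⟩)|(⟨b1,b2⟩|e2|⟨i3,hi3,e2⟩)) <;>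
    first
      | omega
      | (have := nnc k j i2; omega)
      | (have := nnc k j i3; omega)
      | (have := nnc k j i2; have := nnc k j i3; omega)
      | (have := nnc k j i3; have := tric k j i i3; omega)
      | (have := nnc k j i2; have := tric k j i i2; omega)
      | (have := nnc k j i2; have := nnc k j i3; have := tric k j i2 i3; omega)
      | (have := nnc k j i2; have := nnc k j i3; have := tri3c k j i3 i i2; omega)
      | (have := nnc k j i2; have := nnc k j i3; have := tri3c k j i i2 i3; omega)
      | (have := nnc k j i2; have := nnc k j i3; have := tri3c k j i2 i i3; omega)

noncomputable section
open Finset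

variable (k j l : ℕ)

/-- the count `g x` -/
def gg (x : ℤ) : ℕ := ((DF k j l).filter (fun y => y + x ∈ DF k j l)).card

lemma neg_mem_DF {z : ℤ} : -z ∈ DF k j l ↔ z ∈ DF k j l := by
  rw [mem_DF, mem_DF, neg_neg]; exact or_comm

lemma zero_not_mem_DF (hjk : j < k) : (0:ℤ) ∉ DF k j l := by
  rw [mem_DF]
  rintro ((⟨a1,a2⟩|e1|⟨i2,hi2,e1⟩)|(⟨a1,a2⟩|e1|⟨i2,hi2,e1⟩)) <;>
    (try omega) <;> (have := nnc k j i2; omega)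

lemma card_filter_sub (x : ℤ) :
    ((DF k j l).filter (fun y => x - y ∈ DF k j l)).card = gg k j l x := by
  rw [gg]
  have h : (DF k j l).filter (fun y => y + x ∈ DF k j l)
      = ((DF k j l).filter (fun y => x - y ∈ DF k j l)).image (fun y => -y) := by
    ext z
    simp only [Finset.mem_image, Finset.mem_filter]
    constructor
    · rintro ⟨hz, hzx⟩
      exact ⟨-z, ⟨(neg_mem_DF k j l).mpr hz, by rw [show x - -z = z + x by ring]; exact hzx⟩,
        neg_neg z⟩
    · rintro ⟨y, ⟨hy, hxy⟩, rfl⟩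
      refine ⟨(neg_mem_DF k j l).mpr (by simpa using hy), ?_⟩
      rw [show -y + x = x - y by ring]; exact hxy
  rw [h, Finset.card_image_of_injective _ neg_injective]

lemma gg_neg (x : ℤ) : gg k j l (-x) = gg k j l x := by
  rw [gg, gg]
  have h : (DF k j l).filter (fun y => y + -x ∈ DF k j l)
      = ((DF k j l).filter (fun y => y + x ∈ DF k j l)).image (fun y => -y) := by
    ext z
    simp only [Finset.mem_image, Finset.mem_filter]
    constructor
    · rintro ⟨hz, hzx⟩
      refine ⟨-z, ⟨(neg_mem_DF k j l).mpr hz, ?_⟩, neg_neg z⟩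
      rw [show -z + x = -(z + -x) by ring]; exact (neg_mem_DF k j l).mpr hzx
    · rintro ⟨y, ⟨hy, hxy⟩, rfl⟩
      refine ⟨(neg_mem_DF k j l).mpr (by simpa using hy), ?_⟩
      rw [show -y + -x = -(y + x) by ring]; exact (neg_mem_DF k j l).mpr hxy
  rw [h, Finset.card_image_of_injective _ neg_injective]

lemma TF_pos {z : ℤ} (hz : z ∈ TF k j l) (hjk : j < k) : 1 ≤ z := by
  rw [mem_TF] at hz
  rcases hz with ⟨a1,a2⟩|e1|⟨i2,hi2,e1⟩ <;> (try omega) <;> (have := nnc k j i2; omega)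

lemma sum_gg_DF (hjk : j < k) :
    ∑ x ∈ DF k j l, gg k j l x = 2 * ∑ x ∈ TF k j l, gg k j l x := by
  have hdisj : Disjoint (TF k j l) ((TF k j l).image (fun z => -z)) := by
    rw [Finset.disjoint_left]
    intro a ha hb
    rw [Finset.mem_image] at hb
    obtain ⟨b, hb, rfl⟩ := hb
    have h1 := TF_pos k j l ha hjk
    have h2 := TF_pos k j l hb hjk
    omega
  rw [DF, Finset.sum_union hdisj, Finset.sum_image (by intro x _ y _ h; simp only at h; omega)]
  have : ∑ x ∈ TF k j l, gg k j l (-x) = ∑ x ∈ TF k j l, gg k j l x :=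
    Finset.sum_congr rfl (fun x _ => gg_neg k j l x)
  omega

lemma gg_m (hjk : j < k) : gg k j l ((k:ℤ)+j) = k - 1 - j := by
  rw [gg, filter_m k j l hjk, Int.card_Icc]
  omega

lemma gg_a (hjk : j < k) (i : ℕ) : gg k j l (aTerm k j i) = 0 := by
  rw [gg, filter_a k j l hjk i, Finset.card_empty]

lemma gg_small (hjk : j < k) (t : ℕ) (ht : t < k - 1) :
    gg k j l ((t:ℤ)+1) = (k - 1 - (t+1)) + ((k - 1 - (t+1)) + (t + (if j ≤ t then 2 else 0))) := by
  rw [gg, filter_small k j l hjk ((t:ℤ)+1) (by omega) (by omega)]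
  have hd1 : Disjoint (Finset.Icc (-((k:ℤ)-1)) (-(((t:ℤ)+1)+1))) (Finset.Icc (-(((t:ℤ)+1)-1)) (-1)) := by
    rw [Finset.disjoint_left]; intro a ha hb
    simp only [Finset.mem_Icc] at ha hb; omega
  have hd2 : Disjoint (Finset.Icc 1 ((k:ℤ)-1-((t:ℤ)+1)))
      (Finset.Icc (-((k:ℤ)-1)) (-(((t:ℤ)+1)+1)) ∪ Finset.Icc (-(((t:ℤ)+1)-1)) (-1)) := by
    rw [Finset.disjoint_left]; intro a ha hb
    simp only [Finset.mem_Icc, Finset.mem_union] at ha hb; omega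
  have hd3 : Disjoint
      (Finset.Icc 1 ((k:ℤ)-1-((t:ℤ)+1)) ∪ (Finset.Icc (-((k:ℤ)-1)) (-(((t:ℤ)+1)+1)) ∪ Finset.Icc (-(((t:ℤ)+1)-1)) (-1)))
      (({(k:ℤ)+j-((t:ℤ)+1), -((k:ℤ)+j)} : Finset ℤ).filter (fun _ => (j:ℤ)+1 ≤ (t:ℤ)+1)) := by
    rw [Finset.disjoint_left]; intro a ha hb
    simp only [Finset.mem_Icc, Finset.mem_union, Finset.mem_filter, Finset.mem_insert,
      Finset.mem_singleton] at ha hb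
    omega
  rw [Finset.card_union_of_disjoint hd3, Finset.card_union_of_disjoint hd2,
    Finset.card_union_of_disjoint hd1, Int.card_Icc, Int.card_Icc, Int.card_Icc]
  by_cases hjt : j ≤ t
  · rw [if_pos hjt, Finset.filter_true_of_mem (fun _ _ => by omega : ∀ x ∈ ({(k:ℤ)+j-((t:ℤ)+1), -((k:ℤ)+j)} : Finset ℤ), (j:ℤ)+1 ≤ (t:ℤ)+1)]
    rw [Finset.card_insert_of_notMem (by simp; omega), Finset.card_singleton]
    omega
  · rw [if_neg hjt, Finset.filter_false_of_mem (fun x _ => by omega), Finset.card_empty]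
    omega

lemma sum_gg_TF (hjk : j < k) :
    ∑ x ∈ TF k j l, gg k j l x = 3 * Nat.choose (k-1) 2 + 3 * (k - 1 - j) := by
  have hdisjA : Disjoint (Finset.Icc 1 ((k:ℤ)-1) ∪ {((k:ℤ)+j)}) ((Finset.range l).image (aTerm k j)) := by
    rw [Finset.disjoint_left]
    intro a ha hb
    simp only [Finset.mem_union, Finset.mem_Icc, Finset.mem_singleton] at ha
    simp only [Finset.mem_image, Finset.mem_range] at hb
    obtain ⟨i, _, rfl⟩ := hb
    have := nnc k j i
    rw [aTerm] at ha
    omega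
  have hdisjm : Disjoint (Finset.Icc 1 ((k:ℤ)-1)) ({((k:ℤ)+j)} : Finset ℤ) := by
    rw [Finset.disjoint_left]
    intro a ha hb
    simp only [Finset.mem_Icc] at ha
    simp only [Finset.mem_singleton] at hb
    omega
  rw [TF, Finset.sum_union hdisjA, Finset.sum_union hdisjm, Finset.sum_singleton]
  have hA : ∑ x ∈ (Finset.range l).image (aTerm k j), gg k j l x = 0 := by
    apply Finset.sum_eq_zero
    intro x hx
    simp only [Finset.mem_image, Finset.mem_range] at hx
    obtain ⟨i, _, rfl⟩ := hx
    exact gg_a k j l hjk i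
  have hIcc : Finset.Icc (1:ℤ) ((k:ℤ)-1) = (Finset.range (k-1)).image (fun t : ℕ => (t:ℤ)+1) := by
    ext z
    simp only [Finset.mem_Icc, Finset.mem_image, Finset.mem_range]
    constructor
    · intro h; exact ⟨(z-1).toNat, by omega, by omega⟩
    · rintro ⟨t, ht, rfl⟩; omega
  rw [hIcc, Finset.sum_image (by intro x _ y _ h; simp only at h; omega)]
  have hsc : ∑ t ∈ Finset.range (k-1), gg k j l ((t:ℤ)+1)
      = ∑ t ∈ Finset.range (k-1), ((k - 1 - (t+1)) + ((k - 1 - (t+1)) + (t + (if j ≤ t then 2 else 0)))) :=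
    Finset.sum_congr rfl (fun t ht => gg_small k j l hjk t (Finset.mem_range.mp ht))
  rw [hsc, Finset.sum_add_distrib, Finset.sum_add_distrib, Finset.sum_add_distrib]
  have h1 : ∑ t ∈ Finset.range (k-1), (k - 1 - (t+1)) = ∑ t ∈ Finset.range (k-1), t := by
    rw [← Finset.sum_range_reflect (fun t => t) (k-1)]
    exact Finset.sum_congr rfl (fun t ht => by
      have := Finset.mem_range.mp ht; omega)
  have h2 : (∑ t ∈ Finset.range (k-1), t) * 2 = (k-1) * (k - 1 - 1) := Finset.sum_range_id_mul_two (k-1)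
  have h3 : Nat.choose (k-1) 2 = (k-1) * (k - 1 - 1) / 2 := Nat.choose_two_right (k-1)
  have h4 : ∑ t ∈ Finset.range (k-1), (if j ≤ t then 2 else 0) = 2 * (k - 1 - j) := by
    rw [← Finset.sum_filter]
    have : (Finset.range (k-1)).filter (fun t => j ≤ t) = Finset.Ico j (k-1) := by
      ext t; simp only [Finset.mem_filter, Finset.mem_range, Finset.mem_Ico]; omega
    rw [this, Finset.sum_const, Nat.card_Ico, smul_eq_mul]
    omega
  rw [h1, h4, gg_m k j l hjk]
  omega
end

/-- The model graph on the vertex set `DF k j l`. -/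
def Hm (k j l : ℕ) : SimpleGraph ↥(DF k j l) where
  Adj a b := (a:ℤ) ≠ (b:ℤ) ∧ (a:ℤ) - (b:ℤ) ∈ DF k j l
  symm := by
    constructor
    rintro a b ⟨h1, h2⟩
    refine ⟨fun h => h1 (by rw [h]), ?_⟩
    rw [show (b:ℤ) - a = -((a:ℤ) - b) by ring]
    exact (neg_mem_DF k j l).mpr h2
  loopless := ⟨fun a h => h.1 rfl⟩

noncomputable instance (k j l : ℕ) : DecidableRel (Hm k j l).Adj :=
  fun a b => inferInstanceAs (Decidable (((a:ℤ) ≠ (b:ℤ)) ∧ ((a:ℤ) - (b:ℤ) ∈ DF k j l)))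

lemma Hm_degree (k j l : ℕ) (hjk : j < k) (a : ↥(DF k j l)) :
    (Hm k j l).degree a = ((DF k j l).filter (fun y => (a:ℤ) - y ∈ DF k j l)).card := by
  show ((Hm k j l).neighborFinset a).card = _
  refine Finset.card_bij (fun b _ => (b : ℤ)) ?_ ?_ ?_
  · intro b hb
    rw [SimpleGraph.mem_neighborFinset] at hb
    exact Finset.mem_filter.mpr ⟨b.2, hb.2⟩
  · intro b _ b' _ h
    exact Subtype.ext h
  · intro y hy
    rw [Finset.mem_filter] at hy
    refine ⟨⟨y, hy.1⟩, ?_, rfl⟩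
    rw [SimpleGraph.mem_neighborFinset]
    refine ⟨fun h => ?_, hy.2⟩
    have : (a:ℤ) - y = 0 := by rw [h]; ring
    rw [this] at hy
    exact zero_not_mem_DF k j l hjk hy.2

lemma count_Hm (k j l : ℕ) (hjk : j < k) :
    Nat.card (Hm k j l).edgeSet = 3 * Nat.choose (k-1) 2 + 3 * (k - 1 - j) := by
  have hhs := SimpleGraph.sum_degrees_eq_twice_card_edges (Hm k j l)
  have h1 : ∑ v : ↥(DF k j l), (Hm k j l).degree v = ∑ x ∈ DF k j l, gg k j l x := by
    rw [Finset.univ_eq_attach]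
    rw [show ∑ v ∈ (DF k j l).attach, (Hm k j l).degree v
        = ∑ v ∈ (DF k j l).attach, ((DF k j l).filter (fun y => (v:ℤ) - y ∈ DF k j l)).card from
      Finset.sum_congr rfl (fun v _ => Hm_degree k j l hjk v)]
    rw [Finset.sum_attach (DF k j l) (fun x => ((DF k j l).filter (fun y => x - y ∈ DF k j l)).card)]
    exact Finset.sum_congr rfl (fun x _ => card_filter_sub k j l x)
  rw [h1, sum_gg_DF k j l hjk, sum_gg_TF k j l hjk] at hhs
  have h2 : Nat.card (Hm k j l).edgeSet = (Hm k j l).edgeFinset.card := by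
    rw [Nat.card_eq_fintype_card, SimpleGraph.edgeFinset_card]
  omega

lemma mem_DF' {k j l : ℕ} {z : ℤ} : z ∈ DF k j l ↔ z ∈ TF k j l ∨ -z ∈ TF k j l := by
  rw [DF, Finset.mem_union]
  constructor
  · rintro (h | h)
    · exact Or.inl h
    · right; rw [Finset.mem_image] at h; obtain ⟨a, ha, rfl⟩ := h; simpa using ha
  · rintro (h | h)
    · exact Or.inl h
    · right; rw [Finset.mem_image]; exact ⟨-z, h, by ring⟩

lemma mem_Skjl {n k j l : ℕ} {s : ZMod n} : s ∈ Skjl n k j l ↔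
    ∃ t : ℕ, ((1 ≤ t ∧ t ≤ k-1) ∨ t = k+j ∨
      (∃ i : ℕ, i < l ∧ t = 2*(k+j)+1+i*(k+j+1))) ∧ (t : ZMod n) = s := by
  simp only [Skjl, Set.mem_image, Set.mem_union, Set.mem_Icc, Set.mem_singleton_iff,
    Set.mem_Iio]
  constructor
  · rintro ⟨t, ht, rfl⟩
    refine ⟨t, ?_, rfl⟩
    rcases ht with (h | h) | ⟨i, hi, rfl⟩
    · exact Or.inl h
    · exact Or.inr (Or.inl h)
    · exact Or.inr (Or.inr ⟨i, hi, rfl⟩)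
  · rintro ⟨t, ht, rfl⟩
    refine ⟨t, ?_, rfl⟩
    rcases ht with h | h | ⟨i, hi, rfl⟩
    · exact Or.inl (Or.inl h)
    · exact Or.inl (Or.inr h)
    · exact Or.inr ⟨i, hi, rfl⟩

lemma natcond_iff {k j l : ℕ} (hjk : j < k) (t : ℕ) :
    ((1 ≤ t ∧ t ≤ k-1) ∨ t = k+j ∨
      (∃ i : ℕ, i < l ∧ t = 2*(k+j)+1+i*(k+j+1))) ↔ (t:ℤ) ∈ TF k j l := by
  rw [mem_TF]
  constructor
  · rintro (⟨h1,h2⟩|h|⟨i,hi,h⟩)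
    · left; omega
    · right; left; omega
    · right; right
      refine ⟨i, hi, ?_⟩
      subst h; push_cast; ring
  · rintro (⟨h1,h2⟩|h|⟨i,hi,h⟩)
    · left; omega
    · right; left; omega
    · right; right
      refine ⟨i, hi, ?_⟩
      have h2 : ((2*(k+j)+1+i*(k+j+1) : ℕ) : ℤ) = (t:ℤ) := by push_cast; omega
      exact_mod_cast h2.symm

lemma TF_bound {k j l : ℕ} (hjk : j < k) {z : ℤ} (hz : z ∈ TF k j l) :
    1 ≤ z ∧ z ≤ 2*((k:ℤ)+j)+1+(l:ℤ)*((k:ℤ)+j+1) := by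
  rw [mem_TF] at hz
  have hll := nnc k j l
  rcases hz with ⟨a1,a2⟩|e1|⟨i,hi,e1⟩
  · omega
  · omega
  · have h1 := nnc k j i
    have h2 : (i:ℤ)*((k:ℤ)+j+1) ≤ (l:ℤ)*((k:ℤ)+j+1) :=
      mul_le_mul_of_nonneg_right (by exact_mod_cast hi.le) (by positivity)
    omega

lemma cast_mem_iff {k j l : ℕ} (hjk : j < k) (n : ℕ) [NeZero n]
    (hn : 3*(2*((k:ℤ)+j)+1+(l:ℤ)*((k:ℤ)+j+1)) + 1 ≤ (n:ℤ)) (z : ℤ)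
    (hz : |z| ≤ 2*(2*((k:ℤ)+j)+1+(l:ℤ)*((k:ℤ)+j+1))) :
    ((z : ZMod n) ∈ Skjl n k j l ∪ -(Skjl n k j l)) ↔ z ∈ DF k j l := by
  have hz' := abs_le.mp hz
  constructor
  · rintro (h | h)
    · rw [mem_Skjl] at h
      obtain ⟨t, ht, hts⟩ := h
      have htT : (t:ℤ) ∈ TF k j l := (natcond_iff hjk t).mp ht
      have hb := TF_bound hjk htT
      have h0 : ((z - (t:ℤ) : ℤ) : ZMod n) = 0 := by push_cast; rw [← hts]; ring
      have hd : (n:ℤ) ∣ z - t := (ZMod.intCast_zmod_eq_zero_iff_dvd _ n).mp h0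
      have hzt : z - t = 0 := Int.eq_zero_of_abs_lt_dvd hd (by rw [abs_lt]; omega)
      rw [mem_DF']
      left
      rw [show z = (t:ℤ) by omega]
      exact htT
    · rw [Set.mem_neg, mem_Skjl] at h
      obtain ⟨t, ht, hts⟩ := h
      have htT : (t:ℤ) ∈ TF k j l := (natcond_iff hjk t).mp ht
      have hb := TF_bound hjk htT
      have h0 : ((z + (t:ℤ) : ℤ) : ZMod n) = 0 := by push_cast; rw [hts]; ring
      have hd : (n:ℤ) ∣ z + t := (ZMod.intCast_zmod_eq_zero_iff_dvd _ n).mp h0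
      have hzt : z + t = 0 := Int.eq_zero_of_abs_lt_dvd hd (by rw [abs_lt]; omega)
      rw [mem_DF']
      right
      rw [show -z = (t:ℤ) by omega]
      exact htT
  · intro h
    rw [mem_DF'] at h
    rcases h with h | h
    · left
      rw [mem_Skjl]
      have hb := TF_bound hjk h
      have hzn : ((z.toNat : ℕ) : ℤ) = z := Int.toNat_of_nonneg (by omega)
      refine ⟨z.toNat, (natcond_iff hjk _).mpr (by rw [hzn]; exact h), ?_⟩
      calc ((z.toNat : ℕ) : ZMod n) = (((z.toNat:ℕ):ℤ) : ZMod n) := by push_cast; ring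
        _ = (z : ZMod n) := by rw [hzn]
    · right
      rw [Set.mem_neg, mem_Skjl]
      have hb := TF_bound hjk h
      have hzn : (((-z).toNat : ℕ) : ℤ) = -z := Int.toNat_of_nonneg (by omega)
      refine ⟨(-z).toNat, (natcond_iff hjk _).mpr (by rw [hzn]; exact h), ?_⟩
      calc (((-z).toNat : ℕ) : ZMod n) = ((((-z).toNat:ℕ):ℤ) : ZMod n) := by push_cast; ring
        _ = -(z : ZMod n) := by rw [hzn]; push_cast; ring

theorem nbhdEdgeCount_circulant_Skjl (k j l : ℕ) (hjk : j < k) :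
    ∃ N : ℕ, ∀ n : ℕ, N ≤ n → ∀ v : ZMod n,
      nbhdEdgeCount (Circulant n (Skjl n k j l)) v =
        3 * Nat.choose (k - 1) 2 + 3 * (k - 1 - j) := by
  refine ⟨3*(2*(k+j)+1+l*(k+j+1)) + 1, fun n hn v => ?_⟩
  have hnB : 3*(2*((k:ℤ)+j)+1+(l:ℤ)*((k:ℤ)+j+1)) + 1 ≤ (n:ℤ) := by
    have h := hn
    have : ((3*(2*(k+j)+1+l*(k+j+1)) + 1 : ℕ) : ℤ) ≤ (n:ℤ) := by exact_mod_cast h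
    push_cast at this
    omega
  have hBl := nnc k j l
  haveI : NeZero n := ⟨by
    intro h
    rw [h] at hnB
    simp only [Nat.cast_zero] at hnB
    omega⟩
  set S : Set (ZMod n) := Skjl n k j l with hS
  set G : SimpleGraph (ZMod n) := Circulant n S with hG
  have hDFb : ∀ z : ℤ, z ∈ DF k j l →
      z ≠ 0 ∧ -(2*((k:ℤ)+j)+1+(l:ℤ)*((k:ℤ)+j+1)) ≤ z ∧ z ≤ 2*((k:ℤ)+j)+1+(l:ℤ)*((k:ℤ)+j+1) := by
    intro z hz
    rw [mem_DF'] at hz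
    rcases hz with h | h
    · have := TF_bound hjk h; omega
    · have := TF_bound hjk h; omega
  have key : ∀ z : ℤ, |z| ≤ 2*(2*((k:ℤ)+j)+1+(l:ℤ)*((k:ℤ)+j+1)) →
      (((z : ZMod n) ∈ S ∪ -S) ↔ z ∈ DF k j l) := fun z hz => cast_mem_iff hjk n hnB z hz
  have hinj : ∀ z w : ℤ,
      -(2*(2*((k:ℤ)+j)+1+(l:ℤ)*((k:ℤ)+j+1))) ≤ z - w →
      z - w ≤ 2*(2*((k:ℤ)+j)+1+(l:ℤ)*((k:ℤ)+j+1)) →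
      ((z : ZMod n) = (w : ZMod n)) → z = w := by
    intro z w h1 h2 h
    have h0 : ((z - w : ℤ) : ZMod n) = 0 := by push_cast; rw [h]; ring
    have hd : (n:ℤ) ∣ z - w := (ZMod.intCast_zmod_eq_zero_iff_dvd _ n).mp h0
    have := Int.eq_zero_of_abs_lt_dvd hd (by rw [abs_lt]; omega)
    omega
  -- the vertex map
  have hmem : ∀ z : ↥(DF k j l), (v + ((z:ℤ) : ZMod n)) ∈ G.neighborSet v := by
    intro z
    have hb := hDFb z z.2
    constructor
    · intro h
      have h' : (((z:ℤ)) : ZMod n) = ((0:ℤ) : ZMod n) := by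
        have := (left_eq_add.mp h)
        simpa using this
      have := hinj (z:ℤ) 0 (by omega) (by omega) h'
      omega
    · have harg : v - (v + ((z:ℤ) : ZMod n)) = (((-(z:ℤ)) : ℤ) : ZMod n) := by
        push_cast; ring
      rw [harg]
      exact (key (-(z:ℤ)) (by rw [abs_le]; omega)).mpr ((neg_mem_DF k j l).mpr z.2)
  let f : ↥(DF k j l) → ↥(G.neighborSet v) := fun z => ⟨v + ((z:ℤ) : ZMod n), hmem z⟩
  have hfinj : Function.Injective f := by
    intro z w h
    have h1 : (((z:ℤ)) : ZMod n) = (((w:ℤ)) : ZMod n) := by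
      have := Subtype.ext_iff.mp h
      simpa [f] using this
    have hbz := hDFb _ z.2
    have hbw := hDFb _ w.2
    exact Subtype.ext (hinj _ _ (by omega) (by omega) h1)
  have hfsurj : Function.Surjective f := by
    rintro ⟨w, hw⟩
    obtain ⟨hne, hmem'⟩ := hw
    rcases hmem' with h | h
    · rw [mem_Skjl] at h
      obtain ⟨t, ht, hts⟩ := h
      have htT : (t:ℤ) ∈ TF k j l := (natcond_iff hjk t).mp ht
      refine ⟨⟨-(t:ℤ), mem_DF'.mpr (Or.inr (by simpa using htT))⟩, ?_⟩
      apply Subtype.ext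
      show v + ((-(t:ℤ) : ℤ) : ZMod n) = w
      have : ((-(t:ℤ) : ℤ) : ZMod n) = -((t:ℕ) : ZMod n) := by push_cast; ring
      rw [this, hts]
      ring
    · rw [Set.mem_neg, mem_Skjl] at h
      obtain ⟨t, ht, hts⟩ := h
      have htT : (t:ℤ) ∈ TF k j l := (natcond_iff hjk t).mp ht
      refine ⟨⟨(t:ℤ), mem_DF'.mpr (Or.inl htT)⟩, ?_⟩
      apply Subtype.ext
      show v + (((t:ℤ) : ℤ) : ZMod n) = w
      have : (((t:ℤ) : ℤ) : ZMod n) = ((t:ℕ) : ZMod n) := by push_cast; ring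
      rw [this, hts]
      ring
  let e : ↥(DF k j l) ≃ ↥(G.neighborSet v) := Equiv.ofBijective f ⟨hfinj, hfsurj⟩
  have hadj : ∀ a b : ↥(DF k j l),
      (SimpleGraph.induce (G.neighborSet v) G).Adj (e a) (e b) ↔ (Hm k j l).Adj a b := by
    intro a b
    have hba := hDFb _ a.2
    have hbb := hDFb _ b.2
    have harg : (v + ((a:ℤ) : ZMod n)) - (v + ((b:ℤ) : ZMod n)) = (((a:ℤ) - (b:ℤ) : ℤ) : ZMod n) := by
      push_cast; ring
    constructor
    · rintro ⟨h1, h2⟩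
      have h2' : (v + ((a:ℤ) : ZMod n)) - (v + ((b:ℤ) : ZMod n)) ∈ S ∪ -S := h2
      rw [harg] at h2'
      constructor
      · intro hab
        apply h1
        show v + ((a:ℤ) : ZMod n) = v + ((b:ℤ) : ZMod n)
        rw [hab]
      · exact (key _ (by rw [abs_le]; omega)).mp h2'
    · rintro ⟨h1, h2⟩
      constructor
      · intro hab
        apply h1
        have h1'' : v + ((a:ℤ) : ZMod n) = v + ((b:ℤ) : ZMod n) := hab
        have h1' : (((a:ℤ)) : ZMod n) = (((b:ℤ)) : ZMod n) := add_left_cancel h1''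
        exact hinj _ _ (by omega) (by omega) h1'
      · show (v + ((a:ℤ) : ZMod n)) - (v + ((b:ℤ) : ZMod n)) ∈ S ∪ -S
        rw [harg]
        exact (key _ (by rw [abs_le]; omega)).mpr h2
  let iso : (Hm k j l) ≃g (SimpleGraph.induce (G.neighborSet v) G) := ⟨e, by
    intro a b
    exact hadj a b⟩
  have hcc := Nat.card_congr iso.mapEdgeSet.symm
  show Nat.card (SimpleGraph.induce (G.neighborSet v) G).edgeSet = _
  rw [hcc]
  exact count_Hm k j l hjk
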